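/- Let X = (X_1, X_2) be i.u.d. and let Y = (Y_1, Y_2) be a rearrangement of X whose initial rank R_2 satisfies the strong rank independence condition: for some fixed θ ∈ [0,1], P(R_2 = 2 | Y_1 ∈ A) = θ for every measurable A ⊂ I with Leb(A) > 0. Then Y is equal in distribution to the travellers' process with parameter θ: Y =d Y_θ. Equivalently, almost surely f_θ(Y_1) < f_θ(Y_2). -/

import Mathlib

open MeasureTheory

/-- `X = (X_1,...,X_n)` is i.u.d. -/
def IsIUD {Ω : Type} [MeasurableSpace Ω] (P : Measure Ω) {n : ℕ}
    (X : Ω → Fin n → ℝ) : Prop :=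
  (∀ i, Measurable fun ω => X ω i) ∧
  ProbabilityTheory.iIndepFun (fun i ω => X ω i) P ∧
  ∀ i, P.map (fun ω => X ω i) = volume.restrict (Set.Icc (0:ℝ) 1)

/-- The initial rank `R_{k+1}` (1-based `R_k`): `1 + #{i < k : y_i > y_k}`. -/
noncomputable def irank {n : ℕ} (y : Fin n → ℝ) (k : Fin n) : ℕ :=
  1 + (Finset.univ.filter (fun i : Fin n => i < k ∧ y k < y i)).card

/-- The "V-shaped" function `f_θ` of the travellers' process. -/
noncomputable def fTheta (θ : ℝ) (x : ℝ) : ℝ :=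
  if x ≤ θ then (θ - x) / θ else (x - θ) / (1 - θ)

lemma irank_eq_two_iff (y : Fin 2 → ℝ) : irank y 1 = 2 ↔ y 1 < y 0 := by
  have h : (Finset.univ.filter (fun i : Fin 2 => i < 1 ∧ y 1 < y i))
      = if y 1 < y 0 then {0} else ∅ := by
    by_cases h : y 1 < y 0
    · rw [if_pos h]; ext i; fin_cases i <;> simp [h]
    · rw [if_neg h]; ext i; fin_cases i <;> simp [h]
  rw [irank, h]
  by_cases h' : y 1 < y 0 <;> simp [h']

lemma measurable_fTheta (θ : ℝ) : Measurable (fTheta θ) :=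
  Measurable.ite (measurableSet_le measurable_id measurable_const)
    ((measurable_const.sub measurable_id).div_const θ)
    ((measurable_id.sub measurable_const).div_const (1 - θ))

lemma fTheta_nonneg {θ x : ℝ} (hθ : θ ∈ Set.Icc (0:ℝ) 1) (hx : x ∈ Set.Icc (0:ℝ) 1) :
    0 ≤ fTheta θ x := by
  unfold fTheta; split_ifs with h
  · exact div_nonneg (by linarith) hθ.1
  · exact div_nonneg (by push_neg at h; linarith) (by linarith [hθ.2])

lemma fTheta_le_one {θ x : ℝ} (hθ : θ ∈ Set.Icc (0:ℝ) 1) (hx : x ∈ Set.Icc (0:ℝ) 1) :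
    fTheta θ x ≤ 1 := by
  unfold fTheta; split_ifs with h
  · rcases eq_or_lt_of_le hθ.1 with h0 | h0
    · rw [← h0]; norm_num
    · rw [div_le_one h0]; linarith [hx.1]
  · push_neg at h
    have h1 : θ < 1 := lt_of_lt_of_le h hx.2
    rw [div_le_one (by linarith)]; linarith [hx.2]

lemma fTheta_gt_iff {θ x t : ℝ} (hθ : θ ∈ Set.Icc (0:ℝ) 1) (hx : x ∈ Set.Icc (0:ℝ) 1)
    (ht0 : 0 < t) (ht1 : t < 1) :
    t < fTheta θ x ↔ (x < θ * (1 - t) ∨ θ + (1 - θ) * t < x) := by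
  obtain ⟨hx0, hx1⟩ := hx
  obtain ⟨hθ0, hθ1⟩ := hθ
  unfold fTheta
  constructor
  · intro h; split_ifs at h with hxθ
    · have hp : 0 < θ := by
        rcases eq_or_lt_of_le hθ0 with h0 | h0
        · exfalso; rw [← h0] at h; simp at h; linarith
        · exact h0
      left
      rw [lt_div_iff₀ hp] at h
      nlinarith
    · push_neg at hxθ
      have h1 : θ < 1 := lt_of_lt_of_le hxθ hx1
      right
      rw [lt_div_iff₀ (by linarith)] at h
      nlinarith
  · rintro (h | h)
    · have hp : 0 < θ := by nlinarith
      have hxθ : x ≤ θ := by nlinarith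
      rw [if_pos hxθ, lt_div_iff₀ hp]; nlinarith
    · have h1 : θ < 1 := by nlinarith
      have hxθ : ¬ x ≤ θ := by nlinarith
      rw [if_neg hxθ, lt_div_iff₀ (by linarith)]; nlinarith

/-- The case `n = 2`: if `Y = (Y_1, Y_2)` is a rearrangement of the i.u.d. sequence
`X = (X_1, X_2)` satisfying the strong rank independence condition
`P(R_2 = 2 | Y_1 ∈ A) = θ` for every measurable `A ⊆ [0,1]` of positive measure, then
`Y` is equal in distribution to the travellers' process with parameter `θ`; equivalently
(as stated here) almost surely `f_θ(Y_1) < f_θ(Y_2)`, i.e.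
`P(f_θ(Y_2) < f_θ(Y_1)) = 0`. -/
theorem n2_strong_rank_independence_characterizes_travellers
    {Ω₁ : Type} [MeasurableSpace Ω₁] (P₁ : Measure Ω₁) [IsProbabilityMeasure P₁]
    (X : Ω₁ → Fin 2 → ℝ) (hX : IsIUD P₁ X)
    (σ : Ω₁ → Equiv.Perm (Fin 2))
    (hσ : ∀ s : Equiv.Perm (Fin 2), MeasurableSet {ω | σ ω = s})
    {Ω₂ : Type} [MeasurableSpace Ω₂] (P₂ : Measure Ω₂) [IsProbabilityMeasure P₂]
    (Y : Ω₂ → Fin 2 → ℝ) (hY : Measurable Y)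
    (hlaw : P₂.map Y = P₁.map (fun ω i => X ω (σ ω i)))
    (θ : ℝ) (hθ : θ ∈ Set.Icc (0:ℝ) 1)
    (hsri : ∀ A : Set ℝ, A ⊆ Set.Icc (0:ℝ) 1 → MeasurableSet A → 0 < volume A →
      P₂ ({ω | irank (Y ω) 1 = 2} ∩ {ω | Y ω 0 ∈ A})
        = ENNReal.ofReal θ * P₂ {ω | Y ω 0 ∈ A}) :
    P₂ {ω | fTheta θ (Y ω 1) < fTheta θ (Y ω 0)} = 0 := by
  obtain ⟨hXm, hXi, hXd⟩ := hX
  obtain ⟨hθ0, hθ1⟩ := hθ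
  set μ : Measure ℝ := volume.restrict (Set.Icc (0:ℝ) 1) with hμ
  set ν : Measure (Fin 2 → ℝ) := P₂.map Y with hν
  have hνprob : IsProbabilityMeasure ν := Measure.isProbabilityMeasure_map hY.aemeasurable
  set box : Set (Fin 2 → ℝ) := {y | y 0 ∈ Set.Icc (0:ℝ) 1 ∧ y 1 ∈ Set.Icc (0:ℝ) 1} with hbox
  set D : Set (Fin 2 → ℝ) := {y | y 1 < y 0} with hD
  -- basic measurability
  have hc0 : Measurable (fun y : Fin 2 → ℝ => y 0) := measurable_pi_apply 0
  have hc1 : Measurable (fun y : Fin 2 → ℝ => y 1) := measurable_pi_apply 1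
  have hf : Measurable (fTheta θ) := measurable_fTheta θ
  have hDm : MeasurableSet D := measurableSet_lt hc1 hc0
  have hboxm : MeasurableSet box := (hc0 measurableSet_Icc).inter (hc1 measurableSet_Icc)
  -- measurability of the rearranged process
  have hZm : Measurable (fun ω i => X ω (σ ω i)) := by
    apply measurable_pi_lambda
    intro i
    have hrw : (fun ω => X ω (σ ω i))
        = fun ω => ∑ s : Equiv.Perm (Fin 2),
            Set.indicator {ω' | σ ω' = s} (fun a => X a (s i)) ω := by
      funext ω
      rw [Finset.sum_eq_single (σ ω)]
      · rw [Set.indicator_of_mem (show ω ∈ {ω' | σ ω' = σ ω} from rfl)]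
      · intro s _ hs
        apply Set.indicator_of_notMem
        simp only [Set.mem_setOf_eq]
        exact fun h => hs h.symm
      · intro h; exact absurd (Finset.mem_univ _) h
    rw [hrw]
    exact Finset.measurable_sum _ fun s _ => ((hXm (s i)).indicator (hσ s))
  -- product sets with equal sides have the i.u.d. product probability
  have hprod : ∀ B : Set ℝ, MeasurableSet B →
      ν {y : Fin 2 → ℝ | y 0 ∈ B ∧ y 1 ∈ B} = μ B * μ B := by
    intro B hB
    have hSm : MeasurableSet {y : Fin 2 → ℝ | y 0 ∈ B ∧ y 1 ∈ B} :=
      (hc0 hB).inter (hc1 hB)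
    have h1 : ν {y : Fin 2 → ℝ | y 0 ∈ B ∧ y 1 ∈ B}
        = P₁ ((fun ω i => X ω (σ ω i)) ⁻¹' {y : Fin 2 → ℝ | y 0 ∈ B ∧ y 1 ∈ B}) := by
      rw [hlaw, Measure.map_apply hZm hSm]
    have h2 : ((fun ω i => X ω (σ ω i)) ⁻¹' {y : Fin 2 → ℝ | y 0 ∈ B ∧ y 1 ∈ B})
        = (fun ω => X ω 0) ⁻¹' B ∩ (fun ω => X ω 1) ⁻¹' B := by
      ext ω
      simp only [Set.mem_preimage, Set.mem_setOf_eq, Set.mem_inter_iff]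
      constructor
      · rintro ⟨ha, hb⟩
        have hall : ∀ j : Fin 2, X ω j ∈ B := by
          intro j
          rcases (σ ω).surjective j with ⟨i, rfl⟩
          fin_cases i
          · exact ha
          · exact hb
        exact ⟨hall 0, hall 1⟩
      · rintro ⟨ha, hb⟩
        have hall : ∀ j : Fin 2, X ω j ∈ B := by
          intro j; fin_cases j
          · exact ha
          · exact hb
        exact ⟨hall _, hall _⟩
    have h3 := (hXi.indepFun (show (0 : Fin 2) ≠ 1 by decide)).measure_inter_preimage_eq_mul
      B B hB hB
    rw [h1, h2, h3, ← Measure.map_apply (hXm 0) hB, ← Measure.map_apply (hXm 1) hB,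
      hXd 0, hXd 1]
  -- almost surely in the box
  have hbox1 : ν box = 1 := by
    rw [hbox, hprod _ measurableSet_Icc, hμ, Measure.restrict_apply measurableSet_Icc,
      Set.inter_self, Real.volume_Icc]
    norm_num
  have hboxc : ν boxᶜ = 0 := by
    rw [measure_compl hboxm (measure_ne_top _ _), measure_univ, hbox1, tsub_self]
  have hboxle : ∀ s : Set (Fin 2 → ℝ), ν s ≤ ν (s ∩ box) := by
    intro s
    calc ν s = ν (s ∩ box) + ν (s \ box) := (measure_inter_add_diff s hboxm).symm
    _ ≤ ν (s ∩ box) + ν boxᶜ := add_le_add le_rfl (measure_mono (Set.diff_subset_compl s box))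
    _ = ν (s ∩ box) := by rw [hboxc, add_zero]
  -- the strong rank independence condition, in terms of the law of `Y`
  have hsriν : ∀ A : Set ℝ, A ⊆ Set.Icc (0:ℝ) 1 → MeasurableSet A → 0 < volume A →
      ν (D ∩ {y | y 0 ∈ A}) = ENNReal.ofReal θ * ν {y | y 0 ∈ A} := by
    intro A hA hAm hApos
    have hm1 : MeasurableSet (D ∩ {y : Fin 2 → ℝ | y 0 ∈ A}) := hDm.inter (hc0 hAm)
    rw [hν, Measure.map_apply hY hm1,
      Measure.map_apply hY (show MeasurableSet {y : Fin 2 → ℝ | y 0 ∈ A} from hc0 hAm)]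
    have hpre : Y ⁻¹' (D ∩ {y : Fin 2 → ℝ | y 0 ∈ A})
        = {ω | irank (Y ω) 1 = 2} ∩ {ω | Y ω 0 ∈ A} := by
      ext ω
      simp only [Set.mem_preimage, Set.mem_inter_iff, hD, Set.mem_setOf_eq, irank_eq_two_iff]
    rw [hpre]
    exact hsri A hA hAm hApos
  -- the key estimate, for each level 0 < t < 1
  have hkey : ∀ t : ℝ, 0 < t → t < 1 →
      ν ({y : Fin 2 → ℝ | fTheta θ (y 1) < t ∧ t < fTheta θ (y 0)} ∩ box) = 0 := by
    intro t ht0 ht1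
    have hr : 0 < 1 - t := by linarith
    set c : ℝ := θ * (1 - t) with hc
    set c' : ℝ := θ + (1 - θ) * t with hc'
    have hc0' : 0 ≤ c := mul_nonneg hθ0 hr.le
    have hcθ : c ≤ θ := by nlinarith
    have hc1' : c ≤ 1 := le_trans hcθ hθ1
    have hθc' : θ ≤ c' := by nlinarith
    have hc'0 : 0 ≤ c' := le_trans hθ0 hθc'
    have hc'1 : c' ≤ 1 := by nlinarith
    have h1c' : (1 : ℝ) - c' = (1 - θ) * (1 - t) := by rw [hc']; ring
    -- the union set
    set BU : Set ℝ := Set.Ico (0:ℝ) c ∪ Set.Ioc c' 1 with hBU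
    have hBUm : MeasurableSet BU := measurableSet_Ico.union measurableSet_Ioc
    have hBUsub : BU ⊆ Set.Icc (0:ℝ) 1 := by
      rintro x (hx | hx)
      · exact ⟨hx.1, le_trans hx.2.le hc1'⟩
      · exact ⟨le_trans hc'0 hx.1.le, hx.2⟩
    have hBUf : ∀ x : ℝ, x ∈ Set.Icc (0:ℝ) 1 → (t < fTheta θ x ↔ x ∈ BU) := by
      intro x hx
      rw [fTheta_gt_iff ⟨hθ0, hθ1⟩ hx ht0 ht1, hBU]
      simp [Set.mem_Ico, Set.mem_Ioc, hx.1, hx.2, hc, hc']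
    -- measures of the two pieces
    have hμIco : μ (Set.Ico (0:ℝ) c) = ENNReal.ofReal c := by
      rw [hμ, Measure.restrict_apply measurableSet_Ico,
        Set.inter_eq_left.mpr (show Set.Ico (0:ℝ) c ⊆ Set.Icc 0 1 from
          fun x hx => ⟨hx.1, le_trans hx.2.le hc1'⟩),
        Real.volume_Ico, sub_zero]
    have hμIoc : μ (Set.Ioc c' 1) = ENNReal.ofReal (1 - c') := by
      rw [hμ, Measure.restrict_apply measurableSet_Ioc,
        Set.inter_eq_left.mpr (show Set.Ioc c' (1:ℝ) ⊆ Set.Icc 0 1 from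
          fun x hx => ⟨le_trans hc'0 hx.1.le, hx.2⟩),
        Real.volume_Ioc]
    have hμBU : μ BU = ENNReal.ofReal (1 - t) := by
      rw [hBU, measure_union ?hd measurableSet_Ioc, hμIco, hμIoc,
        ← ENNReal.ofReal_add hc0' (by linarith)]
      · congr 1; rw [hc, h1c']; ring
      case hd =>
        rw [Set.disjoint_left]
        rintro x hx hx'
        exact absurd (lt_of_le_of_lt (le_trans hcθ hθc') hx'.1) (not_lt.mpr hx.2.le)
    -- upper bound for the left piece
    have hup1 : ν {y : Fin 2 → ℝ | y 0 ∈ Set.Ico (0:ℝ) c}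
        ≤ ENNReal.ofReal θ * (ENNReal.ofReal (1 - t) * ENNReal.ofReal (1 - t)) := by
      rcases eq_or_lt_of_le hθ0 with h0 | h0
      · have hce : c = 0 := by rw [hc, ← h0, zero_mul]
        have : {y : Fin 2 → ℝ | y 0 ∈ Set.Ico (0:ℝ) c} = ∅ := by
          ext y; simp [hce]
        rw [this, measure_empty]; exact zero_le
      · have hcpos : 0 < c := mul_pos h0 hr
        have hs := hsriν (Set.Ico 0 c) (fun x hx => ⟨hx.1, le_trans hx.2.le hc1'⟩)
          measurableSet_Ico (by rw [Real.volume_Ico, sub_zero]; exact ENNReal.ofReal_pos.mpr hcpos)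
        have hincl : (D ∩ {y : Fin 2 → ℝ | y 0 ∈ Set.Ico (0:ℝ) c}) ∩ box
            ⊆ {y : Fin 2 → ℝ | y 0 ∈ Set.Ico (0:ℝ) c ∧ y 1 ∈ Set.Ico (0:ℝ) c} := by
          rintro y ⟨⟨hlt, hy0⟩, hb⟩
          exact ⟨hy0, hb.2.1, lt_trans hlt hy0.2⟩
        have h2 : ν (D ∩ {y : Fin 2 → ℝ | y 0 ∈ Set.Ico (0:ℝ) c})
            ≤ ENNReal.ofReal c * ENNReal.ofReal c := by
          calc ν (D ∩ {y : Fin 2 → ℝ | y 0 ∈ Set.Ico (0:ℝ) c})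
              ≤ ν ((D ∩ {y : Fin 2 → ℝ | y 0 ∈ Set.Ico (0:ℝ) c}) ∩ box) := hboxle _
          _ ≤ ν {y : Fin 2 → ℝ | y 0 ∈ Set.Ico (0:ℝ) c ∧ y 1 ∈ Set.Ico (0:ℝ) c} :=
              measure_mono hincl
          _ = μ (Set.Ico (0:ℝ) c) * μ (Set.Ico (0:ℝ) c) := hprod _ measurableSet_Ico
          _ = ENNReal.ofReal c * ENNReal.ofReal c := by rw [hμIco]
        rw [hs] at h2
        have h3 : ENNReal.ofReal c * ENNReal.ofReal c
            = ENNReal.ofReal θ *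
              (ENNReal.ofReal θ * (ENNReal.ofReal (1 - t) * ENNReal.ofReal (1 - t))) := by
          rw [hc, ENNReal.ofReal_mul hθ0]; ring
        rw [h3] at h2
        exact (ENNReal.mul_le_mul_iff_right (ENNReal.ofReal_pos.mpr h0).ne' ENNReal.ofReal_ne_top).mp h2
    -- upper bound for the right piece
    have hup2 : ν {y : Fin 2 → ℝ | y 0 ∈ Set.Ioc c' 1}
        ≤ ENNReal.ofReal (1 - θ) * (ENNReal.ofReal (1 - t) * ENNReal.ofReal (1 - t)) := by
      rcases eq_or_lt_of_le hθ1 with h1 | h1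
      · have hce : c' = 1 := by rw [hc', h1]; ring
        have : {y : Fin 2 → ℝ | y 0 ∈ Set.Ioc c' 1} = ∅ := by
          ext y; simp [hce]
        rw [this, measure_empty]; exact zero_le
      · have hc'lt : c' < 1 := by nlinarith
        have hxt : ν {y : Fin 2 → ℝ | y 0 ∈ Set.Ioc c' 1} ≠ ⊤ := measure_ne_top _ _
        have hs := hsriν (Set.Ioc c' 1) (fun x hx => ⟨le_trans hc'0 hx.1.le, hx.2⟩)
          measurableSet_Ioc (by rw [Real.volume_Ioc]; exact ENNReal.ofReal_pos.mpr (by linarith))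
        have hsplit := measure_inter_add_diff (μ := ν) {y : Fin 2 → ℝ | y 0 ∈ Set.Ioc c' 1} hDm
        rw [Set.inter_comm, hs] at hsplit
        have hincl : ({y : Fin 2 → ℝ | y 0 ∈ Set.Ioc c' 1} \ D) ∩ box
            ⊆ {y : Fin 2 → ℝ | y 0 ∈ Set.Ioc c' 1 ∧ y 1 ∈ Set.Ioc c' 1} := by
          rintro y ⟨⟨hy0, hnD⟩, hb⟩
          exact ⟨hy0, lt_of_lt_of_le hy0.1 (not_lt.mp hnD), hb.2.2⟩
        have hdiff : ν ({y : Fin 2 → ℝ | y 0 ∈ Set.Ioc c' 1} \ D)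
            ≤ ENNReal.ofReal (1 - c') * ENNReal.ofReal (1 - c') := by
          calc ν ({y : Fin 2 → ℝ | y 0 ∈ Set.Ioc c' 1} \ D)
              ≤ ν (({y : Fin 2 → ℝ | y 0 ∈ Set.Ioc c' 1} \ D) ∩ box) := hboxle _
          _ ≤ ν {y : Fin 2 → ℝ | y 0 ∈ Set.Ioc c' 1 ∧ y 1 ∈ Set.Ioc c' 1} := measure_mono hincl
          _ = μ (Set.Ioc c' 1) * μ (Set.Ioc c' 1) := hprod _ measurableSet_Ioc
          _ = ENNReal.ofReal (1 - c') * ENNReal.ofReal (1 - c') := by rw [hμIoc]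
        have hid : ENNReal.ofReal θ * ν {y : Fin 2 → ℝ | y 0 ∈ Set.Ioc c' 1}
              + ENNReal.ofReal (1 - θ) * ν {y : Fin 2 → ℝ | y 0 ∈ Set.Ioc c' 1}
            = ν {y : Fin 2 → ℝ | y 0 ∈ Set.Ioc c' 1} := by
          rw [← add_mul, ← ENNReal.ofReal_add hθ0 (by linarith),
            show θ + (1 - θ) = 1 by ring, ENNReal.ofReal_one, one_mul]
        have heq : ENNReal.ofReal (1 - θ) * ν {y : Fin 2 → ℝ | y 0 ∈ Set.Ioc c' 1}
            = ν ({y : Fin 2 → ℝ | y 0 ∈ Set.Ioc c' 1} \ D) :=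
          (ENNReal.add_right_inj (ENNReal.mul_ne_top ENNReal.ofReal_ne_top hxt)).mp
            (hid.trans hsplit.symm)
        have h3 : ENNReal.ofReal (1 - θ) * ν {y : Fin 2 → ℝ | y 0 ∈ Set.Ioc c' 1}
            ≤ ENNReal.ofReal (1 - θ) *
              (ENNReal.ofReal (1 - θ) * (ENNReal.ofReal (1 - t) * ENNReal.ofReal (1 - t))) := by
          rw [heq]
          refine hdiff.trans_eq ?_
          rw [h1c', ENNReal.ofReal_mul (by linarith)]; ring
        exact (ENNReal.mul_le_mul_iff_right (ENNReal.ofReal_pos.mpr (by linarith)).ne'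
          ENNReal.ofReal_ne_top).mp h3
    -- the upper bound
    have hG : ν ({y : Fin 2 → ℝ | t < fTheta θ (y 0)} ∩ box)
        ≤ ENNReal.ofReal (1 - t) * ENNReal.ofReal (1 - t) := by
      have hGsub : {y : Fin 2 → ℝ | t < fTheta θ (y 0)} ∩ box
          ⊆ {y : Fin 2 → ℝ | y 0 ∈ Set.Ico (0:ℝ) c} ∪ {y : Fin 2 → ℝ | y 0 ∈ Set.Ioc c' 1} := by
        rintro y ⟨hy, hb⟩
        rcases (hBUf (y 0) hb.1).mp hy with h | h
        · exact Or.inl h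
        · exact Or.inr h
      calc ν ({y : Fin 2 → ℝ | t < fTheta θ (y 0)} ∩ box)
          ≤ ν ({y : Fin 2 → ℝ | y 0 ∈ Set.Ico (0:ℝ) c}
              ∪ {y : Fin 2 → ℝ | y 0 ∈ Set.Ioc c' 1}) := measure_mono hGsub
      _ ≤ ν {y : Fin 2 → ℝ | y 0 ∈ Set.Ico (0:ℝ) c}
            + ν {y : Fin 2 → ℝ | y 0 ∈ Set.Ioc c' 1} := measure_union_le _ _
      _ ≤ ENNReal.ofReal θ * (ENNReal.ofReal (1 - t) * ENNReal.ofReal (1 - t))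
            + ENNReal.ofReal (1 - θ) * (ENNReal.ofReal (1 - t) * ENNReal.ofReal (1 - t)) :=
          add_le_add hup1 hup2
      _ = ENNReal.ofReal (1 - t) * ENNReal.ofReal (1 - t) := by
          rw [← add_mul, ← ENNReal.ofReal_add hθ0 (by linarith),
            show θ + (1 - θ) = 1 by ring, ENNReal.ofReal_one, one_mul]
    -- the lower bound
    have hH : ENNReal.ofReal (1 - t) * ENNReal.ofReal (1 - t)
        ≤ ν {y : Fin 2 → ℝ | t < fTheta θ (y 0) ∧ t < fTheta θ (y 1)} := by
      have hs : {y : Fin 2 → ℝ | y 0 ∈ BU ∧ y 1 ∈ BU}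
          ⊆ {y : Fin 2 → ℝ | t < fTheta θ (y 0) ∧ t < fTheta θ (y 1)} := by
        rintro y ⟨h0, h1⟩
        exact ⟨(hBUf _ (hBUsub h0)).mpr h0, (hBUf _ (hBUsub h1)).mpr h1⟩
      calc ENNReal.ofReal (1 - t) * ENNReal.ofReal (1 - t)
          = μ BU * μ BU := by rw [hμBU]
      _ = ν {y : Fin 2 → ℝ | y 0 ∈ BU ∧ y 1 ∈ BU} := (hprod _ hBUm).symm
      _ ≤ ν {y : Fin 2 → ℝ | t < fTheta θ (y 0) ∧ t < fTheta θ (y 1)} := measure_mono hs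
    -- combine
    have hHbm : MeasurableSet
        ({y : Fin 2 → ℝ | t < fTheta θ (y 0) ∧ t < fTheta θ (y 1)} ∩ box) :=
      (((hf.comp hc0) measurableSet_Ioi).inter ((hf.comp hc1) measurableSet_Ioi)).inter hboxm
    have hdisj : Disjoint ({y : Fin 2 → ℝ | fTheta θ (y 1) < t ∧ t < fTheta θ (y 0)} ∩ box)
        ({y : Fin 2 → ℝ | t < fTheta θ (y 0) ∧ t < fTheta θ (y 1)} ∩ box) := by
      rw [Set.disjoint_left]
      rintro y ⟨⟨h1, _⟩, _⟩ ⟨⟨_, h2⟩, _⟩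
      exact absurd h2 (not_lt.mpr h1.le)
    have hcup : ({y : Fin 2 → ℝ | fTheta θ (y 1) < t ∧ t < fTheta θ (y 0)} ∩ box)
          ∪ ({y : Fin 2 → ℝ | t < fTheta θ (y 0) ∧ t < fTheta θ (y 1)} ∩ box)
        ⊆ {y : Fin 2 → ℝ | t < fTheta θ (y 0)} ∩ box := by
      rintro y (⟨⟨_, h2⟩, hb⟩ | ⟨⟨h2, _⟩, hb⟩)
      · exact ⟨h2, hb⟩
      · exact ⟨h2, hb⟩
    have hsum : ν ({y : Fin 2 → ℝ | fTheta θ (y 1) < t ∧ t < fTheta θ (y 0)} ∩ box)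
          + ν ({y : Fin 2 → ℝ | t < fTheta θ (y 0) ∧ t < fTheta θ (y 1)} ∩ box)
        ≤ 0 + ν ({y : Fin 2 → ℝ | t < fTheta θ (y 0) ∧ t < fTheta θ (y 1)} ∩ box) := by
      rw [zero_add]
      calc ν ({y : Fin 2 → ℝ | fTheta θ (y 1) < t ∧ t < fTheta θ (y 0)} ∩ box)
            + ν ({y : Fin 2 → ℝ | t < fTheta θ (y 0) ∧ t < fTheta θ (y 1)} ∩ box)
          = ν (({y : Fin 2 → ℝ | fTheta θ (y 1) < t ∧ t < fTheta θ (y 0)} ∩ box)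
              ∪ ({y : Fin 2 → ℝ | t < fTheta θ (y 0) ∧ t < fTheta θ (y 1)} ∩ box)) :=
            (measure_union hdisj hHbm).symm
      _ ≤ ν ({y : Fin 2 → ℝ | t < fTheta θ (y 0)} ∩ box) := measure_mono hcup
      _ ≤ ENNReal.ofReal (1 - t) * ENNReal.ofReal (1 - t) := hG
      _ ≤ ν {y : Fin 2 → ℝ | t < fTheta θ (y 0) ∧ t < fTheta θ (y 1)} := hH
      _ ≤ ν ({y : Fin 2 → ℝ | t < fTheta θ (y 0) ∧ t < fTheta θ (y 1)} ∩ box) := hboxle _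
    have hle := (ENNReal.add_le_add_iff_right (measure_ne_top ν _)).mp hsum
    exact le_antisymm hle zero_le
  -- conclusion
  have hTm : MeasurableSet {y : Fin 2 → ℝ | fTheta θ (y 1) < fTheta θ (y 0)} :=
    measurableSet_lt (hf.comp hc1) (hf.comp hc0)
  have hmap : P₂ {ω | fTheta θ (Y ω 1) < fTheta θ (Y ω 0)}
      = ν {y : Fin 2 → ℝ | fTheta θ (y 1) < fTheta θ (y 0)} := by
    rw [hν, Measure.map_apply hY hTm]
    rfl
  rw [hmap]
  refine le_antisymm ?_ zero_le
  have hFq : ∀ q : ℚ,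
      ν ({y : Fin 2 → ℝ | fTheta θ (y 1) < (q:ℝ) ∧ (q:ℝ) < fTheta θ (y 0)} ∩ box) = 0 := by
    intro q
    by_cases hq0 : 0 < (q:ℝ)
    · by_cases hq1 : (q:ℝ) < 1
      · exact hkey q hq0 hq1
      · refine measure_mono_null ?_ (measure_empty (μ := ν))
        rintro y ⟨⟨_, h2⟩, hb⟩
        exact absurd (h2.trans_le (fTheta_le_one ⟨hθ0, hθ1⟩ hb.1)) hq1
    · refine measure_mono_null ?_ (measure_empty (μ := ν))
      rintro y ⟨⟨h1, _⟩, hb⟩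
      exact hq0 (lt_of_le_of_lt (fTheta_nonneg ⟨hθ0, hθ1⟩ hb.2) h1)
  have hcov : {y : Fin 2 → ℝ | fTheta θ (y 1) < fTheta θ (y 0)} ∩ box
      ⊆ ⋃ q : ℚ, ({y : Fin 2 → ℝ | fTheta θ (y 1) < (q:ℝ) ∧ (q:ℝ) < fTheta θ (y 0)} ∩ box) := by
    rintro y ⟨hy, hb⟩
    obtain ⟨q, hq1, hq2⟩ := exists_rat_btwn (show fTheta θ (y 1) < fTheta θ (y 0) from hy)
    exact Set.mem_iUnion.mpr ⟨q, ⟨hq1, hq2⟩, hb⟩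
  calc ν {y : Fin 2 → ℝ | fTheta θ (y 1) < fTheta θ (y 0)}
      ≤ ν ({y : Fin 2 → ℝ | fTheta θ (y 1) < fTheta θ (y 0)} ∩ box) := hboxle _
  _ ≤ ν (⋃ q : ℚ, ({y : Fin 2 → ℝ | fTheta θ (y 1) < (q:ℝ) ∧ (q:ℝ) < fTheta θ (y 0)} ∩ box)) :=
      measure_mono hcov
  _ = 0 := measure_iUnion_null hFq
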